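/- The singular complexiton solution u(x,t) = 1/6 + (4 − 4·sin(−x+t)·cosh(x+3t))/(cos(−x+t) − sinh(x+3t))² tends to the constant 1/6 as x → +∞ (for any fixed t), and likewise as x → −∞. -/
import Mathlib

open Filter

private lemma sinh_tendsto_atTop : Tendsto Real.sinh atTop atTop :=
  tendsto_atTop_mono' atTop
    ((eventually_gt_atTop 0).mono fun x hx => (Real.self_lt_sinh_iff.mpr hx).le)
    tendsto_id

private lemma sinh_tendsto_atBot : Tendsto Real.sinh atBot atBot :=
  tendsto_atBot_mono' atBot
    ((eventually_lt_atBot 0).mono fun x hx => by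
      have := Real.self_lt_sinh_iff.mpr (neg_pos.mpr hx)
      rw [Real.sinh_neg] at this
      simp only [id_eq]
      linarith)
    tendsto_id

private lemma frac_tendsto (t : ℝ) (l : Filter ℝ)
    (hl : Tendsto (fun x => |Real.sinh (x + 3 * t)|) l atTop) :
    Tendsto (fun x => (4 - 4 * Real.sin (-x + t) * Real.cosh (x + 3 * t))
          / (Real.cos (-x + t) - Real.sinh (x + 3 * t)) ^ 2) l (nhds 0) := by
  apply squeeze_zero_norm' (a := fun x => 32 / |Real.sinh (x + 3 * t)|)
  · filter_upwards [hl.eventually_ge_atTop 2] with x hx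
    set s := |Real.sinh (x + 3 * t)| with hs
    have hs0 : (0:ℝ) < s := by linarith
    have hcosh : Real.cosh (x + 3 * t) ≤ 1 + s := by
      have h1 := Real.cosh_sq (x + 3 * t)
      have h2 := Real.cosh_pos (x + 3 * t)
      have h3 : s ^ 2 = Real.sinh (x + 3 * t) ^ 2 := sq_abs _
      nlinarith
    have hcosh0 := (Real.cosh_pos (x + 3 * t)).le
    have hsin : |Real.sin (-x + t)| ≤ 1 := Real.abs_sin_le_one _
    have hcos : |Real.cos (-x + t)| ≤ 1 := Real.abs_cos_le_one _
    -- numerator bound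
    have hnum : |4 - 4 * Real.sin (-x + t) * Real.cosh (x + 3 * t)| ≤ 8 * s := by
      have h4 : |4 * Real.sin (-x + t) * Real.cosh (x + 3 * t)| ≤ 4 * (1 + s) := by
        rw [abs_mul, abs_mul]
        have : |(4:ℝ)| = 4 := by norm_num
        rw [this, abs_of_nonneg hcosh0]
        nlinarith
      calc |4 - 4 * Real.sin (-x + t) * Real.cosh (x + 3 * t)|
          ≤ |(4:ℝ)| + |4 * Real.sin (-x + t) * Real.cosh (x + 3 * t)| := abs_sub _ _
        _ ≤ 4 + 4 * (1 + s) := by rw [abs_of_nonneg (by norm_num : (0:ℝ) ≤ 4)]; linarith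
        _ ≤ 8 * s := by linarith
    -- denominator bound
    have hden : s ^ 2 / 4 ≤ (Real.cos (-x + t) - Real.sinh (x + 3 * t)) ^ 2 := by
      have h5 : s - 1 ≤ |Real.cos (-x + t) - Real.sinh (x + 3 * t)| := by
        have := abs_sub_abs_le_abs_sub (Real.sinh (x + 3 * t)) (Real.cos (-x + t))
        rw [abs_sub_comm] at this
        linarith
      have h6 : (s - 1) ^ 2 ≤ (Real.cos (-x + t) - Real.sinh (x + 3 * t)) ^ 2 := by
        rw [← sq_abs (Real.cos (-x + t) - Real.sinh (x + 3 * t))]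
        apply pow_le_pow_left₀ (by linarith) h5
      nlinarith
    have hdenpos : (0:ℝ) < (Real.cos (-x + t) - Real.sinh (x + 3 * t)) ^ 2 := by nlinarith
    rw [Real.norm_eq_abs, abs_div, abs_of_nonneg hdenpos.le]
    rw [div_le_div_iff₀ hdenpos hs0]
    calc |4 - 4 * Real.sin (-x + t) * Real.cosh (x + 3 * t)| * s ≤ 8 * s * s := by
          apply mul_le_mul_of_nonneg_right hnum hs0.le
      _ ≤ 32 * (s ^ 2 / 4) := by ring_nf; nlinarith
      _ ≤ 32 * (Real.cos (-x + t) - Real.sinh (x + 3 * t)) ^ 2 := by linarith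
  · exact tendsto_const_nhds.div_atTop hl

theorem singular_complexiton_tends_to_const
    (u : ℝ → ℝ → ℝ)
    (hu : ∀ x t, u x t = 1 / 6
        + (4 - 4 * Real.sin (-x + t) * Real.cosh (x + 3 * t))
          / (Real.cos (-x + t) - Real.sinh (x + 3 * t)) ^ 2) :
    ∀ t : ℝ,
      Tendsto (fun x => u x t) atTop (nhds (1 / 6))
      ∧ Tendsto (fun x => u x t) atBot (nhds (1 / 6)) := by
  intro t
  have harg_top : Tendsto (fun x : ℝ => x + 3 * t) atTop atTop :=
    tendsto_atTop_add_const_right _ _ tendsto_id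
  have harg_bot : Tendsto (fun x : ℝ => x + 3 * t) atBot atBot :=
    tendsto_atBot_add_const_right _ _ tendsto_id
  refine ⟨?_, ?_⟩
  · have h := frac_tendsto t atTop (tendsto_abs_atTop_atTop.comp (sinh_tendsto_atTop.comp harg_top))
    have := h.const_add (1 / 6 : ℝ)
    rw [add_zero] at this
    simp only [hu]
    exact this
  · have h := frac_tendsto t atBot (tendsto_abs_atBot_atTop.comp (sinh_tendsto_atBot.comp harg_bot))
    have := h.const_add (1 / 6 : ℝ)
    rw [add_zero] at this
    simp only [hu]
    exact this
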